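/- arXiv:1412.5544 — 13 statements merged into one kernel-verified Lean document; each statement's English description precedes it below -/
import Mathlib

section
/- If I is a nil ideal of a ring R and R/I is weakly nil-clean, then R is weakly nil-clean. -/
/-- A ring is weakly nil-clean if every element is a sum or a difference of a
nilpotent and an idempotent. -/
def IsWeaklyNilClean (R : Type*) [Ring R] : Prop :=
  ∀ a : R, ∃ b e : R, IsNilpotent b ∧ IsIdempotentElem e ∧ (a = b + e ∨ a = b - e)

theorem weaklyNilClean_of_quotient_nil {R : Type*} [Ring R] (I : TwoSidedIdeal R)
    (hnil : ∀ x ∈ I, IsNilpotent x)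
    (h : IsWeaklyNilClean I.ringCon.Quotient) : IsWeaklyNilClean R := by
  set f : R →+* I.ringCon.Quotient := I.ringCon.mk'
  have hker : ∀ x ∈ RingHom.ker f, IsNilpotent x := by
    intro x hx
    apply hnil
    rwa [← TwoSidedIdeal.ker_ringCon_mk' I, TwoSidedIdeal.mem_ker]
  have hlift : ∀ b : R, IsNilpotent (f b) → IsNilpotent b := by
    intro b ⟨n, hn⟩
    have : b ^ n ∈ RingHom.ker f := by rw [RingHom.mem_ker, map_pow]; exact hn
    obtain ⟨m, hm⟩ := hker _ this
    exact ⟨n * m, by rw [pow_mul, hm]⟩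
  intro a
  obtain ⟨b, e, hb, he, hcase⟩ := h (f a)
  have hrange : e ∈ f.range := by
    obtain ⟨b', hb'⟩ := Quot.exists_rep b
    have hfb : f b' = b := hb'
    rcases hcase with hc | hc
    · exact ⟨a - b', by rw [map_sub, hfb]; rw [hc]; abel⟩
    · exact ⟨b' - a, by rw [map_sub, hfb]; rw [hc]; abel⟩
  obtain ⟨e', he', hfe'⟩ := exists_isIdempotentElem_eq_of_ker_isNilpotent f hker e hrange he
  rcases hcase with hc | hc
  · refine ⟨a - e', e', hlift _ ?_, he', Or.inl (by abel)⟩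
    rw [map_sub, hfe', hc, add_sub_cancel_right]
    exact hb
  · refine ⟨a + e', e', hlift _ ?_, he', Or.inr (by abel)⟩
    rw [map_add, hfe', hc, sub_add_cancel]
    exact hb
end

section
/- If R is a weakly nil-clean ring, then 6 (i.e., 6·1) is nilpotent in R. -/
theorem six_isNilpotent {R : Type*} [Ring R] (h : IsWeaklyNilClean R) :
    IsNilpotent (6 : R) := by
  obtain ⟨b, e, hb, he, hcase⟩ := h (3 : R)
  have hc : Commute b ((5 : R) - b) :=
    (Commute.ofNat_right b 5).sub_right (Commute.refl b)
  have hc7 : Commute b ((7 : R) - b) :=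
    (Commute.ofNat_right b 7).sub_right (Commute.refl b)
  rcases hcase with h3 | h3
  · -- e = 3 - b
    have heq : e = 3 - b := by rw [h3]; abel
    have he' : (3 - b) * (3 - b) = 3 - b := by rw [← heq]; exact he
    have key : (6 : R) = b * (5 - b) := by
      have h1 : b * (5 - b) - 6 = -((3 - b) * (3 - b) - (3 - b)) := by noncomm_ring; norm_num
      have h0 : b * (5 - b) - 6 = 0 := by rw [h1, he', sub_self, neg_zero]
      exact (sub_eq_zero.mp h0).symm
    rw [key]
    exact hc.isNilpotent_mul_right hb
  · -- e = b - 3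
    have heq : e = b - 3 := by rw [h3]; abel
    have he' : (b - 3) * (b - 3) = b - 3 := by rw [← heq]; exact he
    have key : (12 : R) = b * (7 - b) := by
      have h1 : b * (7 - b) - 12 = -((b - 3) * (b - 3) - (b - 3)) := by noncomm_ring; norm_num
      have h0 : b * (7 - b) - 12 = 0 := by rw [h1, he', sub_self, neg_zero]
      exact (sub_eq_zero.mp h0).symm
    have h12 : IsNilpotent (12 : R) := by
      rw [key]; exact hc7.isNilpotent_mul_right hb
    obtain ⟨n, hn⟩ := h12
    refine ⟨2 * n, ?_⟩
    have h36 : (6 : R) ^ 2 = 3 * 12 := by norm_num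
    calc (6 : R) ^ (2 * n) = ((6 : R) ^ 2) ^ n := by rw [pow_mul]
      _ = (3 * 12 : R) ^ n := by rw [h36]
      _ = 3 ^ n * 12 ^ n := (Commute.ofNat_right (3:R) 12).mul_pow n
      _ = 0 := by rw [hn, mul_zero]
end

section
/- If R is a weakly nil-clean ring, then the Jacobson radical J(R) is nil. -/
/-- An idempotent in the Jacobson radical is zero. -/
lemma idem_jacobson_eq_zero {R : Type*} [Ring R] {e : R}
    (he : IsIdempotentElem e) (hmem : e ∈ (⊥ : TwoSidedIdeal R).jacobson) : e = 0 := by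
  obtain ⟨z, hz⟩ := (TwoSidedIdeal.mem_jacobson_iff.mp hmem) (-1)
  rw [TwoSidedIdeal.mem_bot, sub_eq_zero] at hz
  calc e = (z * -1 * e + z) * e := by rw [hz, one_mul]
    _ = -(z * (e * e)) + z * e := by noncomm_ring
    _ = 0 := by rw [he.eq]; abel

lemma pow_mem_jacobson {R : Type*} [Ring R] {e c : R}
    (hmem : e - c ∈ (⊥ : TwoSidedIdeal R).jacobson) (n : ℕ) :
    e ^ n - c ^ n ∈ (⊥ : TwoSidedIdeal R).jacobson := by
  induction n with
  | zero => simp only [pow_zero, sub_self]; exact TwoSidedIdeal.zero_mem _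
  | succ n ih =>
      have : e ^ (n + 1) - c ^ (n + 1) = e * (e ^ n - c ^ n) + (e - c) * c ^ n := by
        rw [pow_succ', pow_succ']; noncomm_ring
      rw [this]
      exact TwoSidedIdeal.add_mem _ (TwoSidedIdeal.mul_mem_left _ _ _ ih)
        (TwoSidedIdeal.mul_mem_right _ _ _ hmem)

theorem jacobson_nil {R : Type*} [Ring R] (h : IsWeaklyNilClean R) :
    ∀ x ∈ (⊥ : TwoSidedIdeal R).jacobson, IsNilpotent x := by
  intro x hx
  obtain ⟨b, e, hb, he, hcase⟩ := h x
  suffices he0 : e = 0 by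
    rcases hcase with rfl | rfl <;> simpa [he0] using hb
  -- In both cases, e differs from ±b by an element of J.
  obtain ⟨c, hc, hnil⟩ : ∃ c : R, e - c ∈ (⊥ : TwoSidedIdeal R).jacobson ∧ IsNilpotent c := by
    rcases hcase with rfl | rfl
    · exact ⟨-b, by simpa [add_comm] using hx, hb.neg⟩
    · refine ⟨b, ?_, hb⟩
      have := TwoSidedIdeal.neg_mem _ hx
      simpa using this
  obtain ⟨n, hn⟩ := hnil
  have hcn : c ^ (n + 1) = 0 := by rw [pow_succ, hn, zero_mul]
  have hpow := pow_mem_jacobson hc (n + 1)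
  rw [hcn, sub_zero, he.pow_succ_eq] at hpow
  exact idem_jacobson_eq_zero he hpow
end

section
/- A finite direct product R = R₁ × ... × Rₙ of rings (n ≥ 2) is weakly nil-clean if and only if there exists an index k such that R_k is weakly nil-clean and R_j is nil-clean for all j ≠ k. -/
/-- A ring is nil-clean if every element is a sum of a nilpotent and an idempotent. -/
def IsNilClean (R : Type*) [Ring R] : Prop :=
  ∀ a : R, ∃ b e : R, IsNilpotent b ∧ IsIdempotentElem e ∧ a = b + e

private lemma pi_nilpotent {n : ℕ} {R : Fin n → Type*} [∀ i, Ring (R i)]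
    {b : ∀ i, R i} (h : ∀ i, IsNilpotent (b i)) : IsNilpotent b := by
  choose m hm using h
  refine ⟨Finset.univ.sup m, ?_⟩
  funext i
  have hle : m i ≤ Finset.univ.sup m := Finset.le_sup (Finset.mem_univ i)
  calc (b ^ Finset.univ.sup m) i = (b i) ^ Finset.univ.sup m := rfl
    _ = (b i) ^ m i * (b i) ^ (Finset.univ.sup m - m i) := by
        rw [← pow_add, Nat.add_sub_cancel' hle]
    _ = 0 := by rw [hm i, zero_mul]

private lemma pi_comp_nilpotent {n : ℕ} {R : Fin n → Type*} [∀ i, Ring (R i)]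
    {b : ∀ i, R i} (h : IsNilpotent b) (i : Fin n) : IsNilpotent (b i) := by
  obtain ⟨m, hm⟩ := h
  exact ⟨m, congrFun hm i⟩

theorem pi_weaklyNilClean_iff {n : ℕ} (hn : 2 ≤ n) (R : Fin n → Type*)
    [∀ i, Ring (R i)] :
    IsWeaklyNilClean (∀ i, R i) ↔
      ∃ k : Fin n, IsWeaklyNilClean (R k) ∧ ∀ j : Fin n, j ≠ k → IsNilClean (R j) := by
  constructor
  · intro h
    by_cases hall : ∀ i, IsNilClean (R i)
    · refine ⟨⟨0, by omega⟩, ?_, fun j _ => hall j⟩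
      intro x
      obtain ⟨b, e, hb, he, hx⟩ := hall _ x
      exact ⟨b, e, hb, he, Or.inl hx⟩
    · push_neg at hall
      obtain ⟨k, hk⟩ := hall
      refine ⟨k, ?_, ?_⟩
      · -- R k is weakly nil-clean
        intro x
        obtain ⟨b, e, hb, he, hx⟩ := h (Pi.single k x)
        refine ⟨b k, e k, pi_comp_nilpotent hb k, congrFun he k, ?_⟩
        rcases hx with hx | hx
        · left; have := congrFun hx k; simpa using this
        · right; have := congrFun hx k; simpa using this
      · -- all other factors are nil-clean
        intro j hj y
        simp only [IsNilClean, not_forall, not_exists] at hk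
        obtain ⟨x, hx⟩ := hk
        set a : ∀ i, R i := Function.update (Pi.single k x) j (-y) with ha
        have hak : a k = x := by
          simp [ha, Function.update_of_ne hj.symm]
        have haj : a j = -y := by rw [ha, Function.update_self]
        obtain ⟨b, e, hb, he, hcase⟩ := h a
        rcases hcase with hsum | hdiff
        · exfalso
          have hk' := congrFun hsum k
          rw [hak] at hk'
          exact hx (b k) (e k) ⟨pi_comp_nilpotent hb k, congrFun he k, hk'⟩
        · have hj' : -y = b j - e j := by rw [← haj]; exact congrFun hdiff j
          refine ⟨-(b j), e j, (pi_comp_nilpotent hb j).neg, congrFun he j, ?_⟩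
          rw [← neg_neg y, hj', neg_sub, sub_eq_neg_add]
  · rintro ⟨k, hk, hj⟩ a
    obtain ⟨bk, ek, hbk, hek, hcase⟩ := hk (a k)
    rcases hcase with hsum | hdiff
    · have : ∀ i, ∃ b e : R i, IsNilpotent b ∧ IsIdempotentElem e ∧ a i = b + e := by
        intro i
        by_cases hi : i = k
        · subst hi; exact ⟨bk, ek, hbk, hek, hsum⟩
        · exact hj i hi (a i)
      choose b e hb he hbe using this
      exact ⟨b, e, pi_nilpotent hb, funext he, Or.inl (funext hbe)⟩
    · have : ∀ i, ∃ b e : R i, IsNilpotent b ∧ IsIdempotentElem e ∧ a i = b - e := by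
        intro i
        by_cases hi : i = k
        · subst hi; exact ⟨bk, ek, hbk, hek, hdiff⟩
        · obtain ⟨b, e, hb, he, hbe⟩ := hj i hi (-(a i))
          refine ⟨-b, e, hb.neg, he, ?_⟩
          rw [← neg_neg (a i), hbe, neg_add, ← sub_eq_add_neg]
      choose b e hb he hbe using this
      exact ⟨b, e, pi_nilpotent hb, funext he, Or.inr (funext hbe)⟩
end

section
/- A ring R is nil-clean if and only if R is weakly nil-clean and 2 ∈ J(R). -/
private lemma two_commute {R : Type*} [Ring R] (y : R) : (2 : R) * y = y * 2 := by
  rw [two_mul, mul_two]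

private lemma two_mul_nilpotent {R : Type*} [Ring R] (h : IsNilpotent (2 : R)) (y : R) :
    IsNilpotent (2 * y) := by
  obtain ⟨k, hk⟩ := h
  refine ⟨k, ?_⟩
  have : Commute (2 : R) y := two_commute y
  rw [this.mul_pow, hk, zero_mul]

private lemma mem_jacobson_of_two_nilpotent {R : Type*} [Ring R] (h : IsNilpotent (2 : R)) :
    (2 : R) ∈ (⊥ : TwoSidedIdeal R).jacobson := by
  rw [TwoSidedIdeal.mem_jacobson_iff]
  intro y
  obtain ⟨u, hu⟩ := (two_mul_nilpotent h y).isUnit_add_one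
  refine ⟨((u⁻¹ : Rˣ) : R), ?_⟩
  rw [TwoSidedIdeal.mem_bot]
  have key : ((u⁻¹ : Rˣ) : R) * (2 * y + 1) = 1 := by
    rw [← hu]; exact u.inv_mul
  calc ((u⁻¹ : Rˣ) : R) * y * 2 + ((u⁻¹ : Rˣ) : R) - 1
      = ((u⁻¹ : Rˣ) : R) * (2 * y + 1) - 1 := by
        rw [mul_add, mul_one, mul_assoc, ← two_commute y, ← mul_assoc]
    _ = 0 := by rw [key, sub_self]

private lemma isUnit_of_jacobson {R : Type*} [Ring R]
    (h2 : (2 : R) ∈ (⊥ : TwoSidedIdeal R).jacobson) (y : R) : IsUnit (2 * y + 1) := by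
  rw [TwoSidedIdeal.mem_jacobson_iff] at h2
  have hleft : ∀ y : R, ∃ z : R, z * (2 * y + 1) = 1 := by
    intro y
    obtain ⟨z, hz⟩ := h2 y
    rw [TwoSidedIdeal.mem_bot] at hz
    refine ⟨z, ?_⟩
    have : z * (2 * y + 1) - 1 = z * y * 2 + z - 1 := by
      rw [mul_add, mul_one, mul_assoc, ← two_commute y, ← mul_assoc]
    rw [← sub_eq_zero, this, hz]
  obtain ⟨z, hz⟩ := hleft y
  -- z = 1 - z * y * 2 = 2 * (-(z * y)) + 1, so z also has a left inverse
  have hzform : z = 2 * (-(z * y)) + 1 := by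
    have : z * (2 * y + 1) = z * (2 * y) + z := by rw [mul_add, mul_one]
    rw [this] at hz
    have h3 : z = 1 - z * (2 * y) := by rw [← hz]; abel
    have e : (2 : R) * (z * y) = z * (2 * y) := by
      rw [two_commute (z * y), mul_assoc, ← two_commute y]
    rw [mul_neg, e, show -(z * (2 * y)) + 1 = 1 - z * (2 * y) from by abel, ← h3]
  obtain ⟨w, hw⟩ := hleft (-(z * y))
  rw [← hzform] at hw
  -- w * z = 1 and z * (2 * y + 1) = 1, hence w = 2 * y + 1
  have hwz : w = 2 * y + 1 := by
    calc w = w * (z * (2 * y + 1)) := by rw [hz, mul_one]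
      _ = (w * z) * (2 * y + 1) := by rw [mul_assoc]
      _ = 2 * y + 1 := by rw [hw, one_mul]
  rw [hwz] at hw
  exact ⟨⟨2 * y + 1, z, hw, hz⟩, rfl⟩

/-- In a weakly nil-clean ring with `2 ∈ J(R)`, `2` is nilpotent. -/
private lemma two_nilpotent_of_weakly {R : Type*} [Ring R] (hw : IsWeaklyNilClean R)
    (h2 : (2 : R) ∈ (⊥ : TwoSidedIdeal R).jacobson) : IsNilpotent (2 : R) := by
  obtain ⟨m, f, hm, hf, hcase⟩ := hw 2
  rcases hcase with h | h
  · -- 2 = m + f, so f = 2 - m, 1 - f = m - 1 is a unit, f(1-f) = 0 ⟹ f = 0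
    have hunit : IsUnit (1 - f) := by
      have hfm : (1 : R) - f = m - 1 := by
        have : f = 2 - m := by rw [h]; noncomm_ring
        rw [this, show (2 : R) = 1 + 1 from by norm_num]
        abel
      rw [hfm]
      exact hm.isUnit_sub_one
    have hzero : f * (1 - f) = 0 := by
      rw [mul_sub, mul_one, hf.eq, sub_self]
    have hf0 : f = 0 := (hunit.mul_left_eq_zero).mp hzero
    rw [h, hf0, add_zero]; exact hm
  · -- 2 = m - f, so f = m - 2, f - 1 = m - 3 = (m-1) - 2 is a unit, f(f-1)=0 ⟹ f=0
    have hfm : f = m - 2 := by rw [h]; noncomm_ring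
    obtain ⟨u, hu⟩ := hm.isUnit_sub_one
    have hunit : IsUnit (f - 1) := by
      have hinv : IsUnit (2 * (-((u⁻¹ : Rˣ) : R)) + 1) := isUnit_of_jacobson h2 _
      have key : f - 1 = (u : R) * (2 * (-((u⁻¹ : Rˣ) : R)) + 1) := by
        have h1 : (u : R) * (2 * (-((u⁻¹ : Rˣ) : R))) = -2 := by
          rw [two_commute, ← mul_assoc, mul_neg, u.mul_inv, neg_mul, one_mul]
        rw [mul_add, mul_one, h1, hu, hfm]
        abel
      rw [key]
      exact u.isUnit.mul hinv
    have hzero : f * (f - 1) = 0 := by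
      rw [mul_sub, mul_one, hf.eq, sub_self]
    have hf0 : f = 0 := (hunit.mul_left_eq_zero).mp hzero
    rw [h, hf0, sub_zero]; exact hm

private lemma nilpotent_sub_two_mul {R : Type*} [Ring R] (h2 : IsNilpotent (2 : R))
    {n : R} (hn : IsNilpotent n) (c : R) : IsNilpotent (n - 2 * c) := by
  obtain ⟨m, hm⟩ := hn
  obtain ⟨k, hk⟩ := h2
  have claim : ∀ j : ℕ, ∃ r : R, (n - 2 * c) ^ j = n ^ j + 2 * r := by
    intro j
    induction j with
    | zero => exact ⟨0, by simp⟩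
    | succ j ih =>
      obtain ⟨r, hr⟩ := ih
      refine ⟨r * n - n ^ j * c - r * (2 * c), ?_⟩
      rw [pow_succ, pow_succ, hr]
      have e1 : (n ^ j) * (2 * c) = 2 * (n ^ j * c) := by
        rw [← mul_assoc, ← two_commute (n ^ j), mul_assoc]
      have e2 : (2 * r) * (2 * c) = 2 * (r * (2 * c)) := by
        rw [mul_assoc]
      calc (n ^ j + 2 * r) * (n - 2 * c)
          = n ^ j * n - n ^ j * (2 * c) + (2 * r * n - 2 * r * (2 * c)) := by
            rw [add_mul, mul_sub, mul_sub]
        _ = n ^ j * n + 2 * (r * n - n ^ j * c - r * (2 * c)) := by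
            rw [e1, e2, mul_assoc 2 r n, mul_sub, mul_sub]; abel
  obtain ⟨r, hr⟩ := claim m
  rw [hm, zero_add] at hr
  refine ⟨m * k, ?_⟩
  have hc : Commute (2 : R) r := two_commute r
  rw [pow_mul, hr, hc.mul_pow, hk, zero_mul]

theorem nilClean_iff_weaklyNilClean_two_mem_jacobson {R : Type*} [Ring R] :
    IsNilClean R ↔
      IsWeaklyNilClean R ∧ (2 : R) ∈ (⊥ : TwoSidedIdeal R).jacobson := by
  constructor
  · intro hnc
    refine ⟨fun a => by obtain ⟨b, e, hb, he, h⟩ := hnc a; exact ⟨b, e, hb, he, Or.inl h⟩, ?_⟩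
    -- nil-clean ⟹ 2 nilpotent
    obtain ⟨n, e, hn, he, h⟩ := hnc (-1)
    have hunit : IsUnit e := by
      have he' : e = -(1 + n) := by
        rw [eq_neg_iff_add_eq_zero]
        have : (-1 : R) - n = e := by rw [h]; noncomm_ring
        rw [← this]; noncomm_ring
      rw [he']
      exact hn.isUnit_one_add.neg
    have he1 : e = 1 := hunit.mul_left_cancel (by rw [mul_one]; exact he.eq)
    have hn2 : n = -2 := by
      rw [he1] at h
      have h1 : n = -1 - 1 := eq_sub_of_add_eq h.symm
      exact h1.trans (by norm_num)
    apply mem_jacobson_of_two_nilpotent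
    have : IsNilpotent (-2 : R) := hn2 ▸ hn
    simpa using this.neg
  · rintro ⟨hw, h2⟩
    have h2nil : IsNilpotent (2 : R) := two_nilpotent_of_weakly hw h2
    intro a
    obtain ⟨n, e, hn, he, hcase⟩ := hw a
    rcases hcase with h | h
    · exact ⟨n, e, hn, he, h⟩
    · refine ⟨n - 2 * e, e, nilpotent_sub_two_mul h2nil hn e, he, ?_⟩
      rw [h]
      rw [two_mul]
      noncomm_ring
end

section
/- If R is a weakly nil-clean ring, then R is isomorphic to a direct product R₁ × R₂ where R₁ is nil-clean and R₂ is weakly nil-clean with 3 ∈ J(R₂) (possibly R₂ = 0). -/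
universe u

section Aux

variable {R : Type u} [Ring R]

/-- The ring congruence `a ≈ b ↔ e * a = e * b` attached to a central element `e`. -/
def idemCon (e : R) (hc : ∀ x : R, e * x = x * e) : RingCon R where
  r a b := e * a = e * b
  iseqv := ⟨fun _ => rfl, Eq.symm, Eq.trans⟩
  mul' {a b c d} h1 h2 := by
    show e * (a * c) = e * (b * d)
    calc e * (a * c) = (e * a) * c := by rw [mul_assoc]
      _ = (e * b) * c := by rw [h1]
      _ = b * (e * c) := by rw [← mul_assoc, hc b, mul_assoc]
      _ = b * (e * d) := by rw [h2]
      _ = e * (b * d) := by rw [← mul_assoc, ← hc b, mul_assoc]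
  add' {a b c d} h1 h2 := by
    show e * (a + c) = e * (b + d)
    rw [mul_add, mul_add, h1, h2]

lemma idemCon_eq (e : R) (hc : ∀ x : R, e * x = x * e) (a b : R) :
    RingCon.mk' (idemCon e hc) a = RingCon.mk' (idemCon e hc) b ↔ e * a = e * b :=
  RingCon.eq _

lemma nilpotent_of_pow_nilpotent {x : R} {m : ℕ} (h : IsNilpotent (x ^ m)) :
    IsNilpotent x := by
  obtain ⟨k, hk⟩ := h
  exact ⟨m * k, by rw [pow_mul, hk]⟩

/-- A surjective image of a weakly nil-clean ring is weakly nil-clean. -/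
lemma isWeaklyNilClean_of_surjective {S : Type*} [Ring S] (f : R →+* S)
    (hf : Function.Surjective f) (h : IsWeaklyNilClean R) : IsWeaklyNilClean S := by
  intro a
  obtain ⟨x, rfl⟩ := hf a
  obtain ⟨b, e, hb, he, hcase⟩ := h x
  refine ⟨f b, f e, hb.map f, ?_, ?_⟩
  · show f e * f e = f e
    rw [← map_mul, he]
  · rcases hcase with hx | hx
    · left; rw [hx, map_add]
    · right; rw [hx, map_sub]

/-- A weakly nil-clean ring in which 2 is nilpotent is nil-clean. -/
lemma isNilClean_of_two_nilpotent (h : IsWeaklyNilClean R)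
    (h2 : IsNilpotent (2 : R)) : IsNilClean R := by
  intro a
  obtain ⟨b, f, hb, hf, hcase⟩ := h a
  rcases hcase with hx | hx
  · exact ⟨b, f, hb, hf, hx⟩
  · refine ⟨b - 2 * f, f, ?_, hf, by rw [hx]; noncomm_ring⟩
    -- (b - 2f)^k = b^k - 2 * r for some r
    have key : ∀ k : ℕ, ∃ r : R, (b - 2 * f) ^ k = b ^ k - 2 * r := by
      intro k
      induction k with
      | zero => exact ⟨0, by simp⟩
      | succ k ih =>
        obtain ⟨r, hr⟩ := ih
        refine ⟨b ^ k * f + r * b - 2 * (r * f), ?_⟩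
        rw [pow_succ, hr, pow_succ]
        noncomm_ring
    obtain ⟨m, hm⟩ := hb
    obtain ⟨r, hr⟩ := key m
    rw [hm, zero_sub] at hr
    apply nilpotent_of_pow_nilpotent (m := m)
    rw [hr]
    exact (((Commute.ofNat_left 2 r).isNilpotent_mul_right h2)).neg

lemma six_nilpotent (h : IsWeaklyNilClean R) : IsNilpotent (6 : R) := by
  obtain ⟨b, e, hb, he, hcase⟩ := h 2
  obtain ⟨n, hn⟩ := hb
  have hb3 : Commute b ((3 : R) - b) :=
    (Commute.ofNat_right b 3).sub_right (Commute.refl b)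
  have hb5 : Commute b ((5 : R) - b) :=
    (Commute.ofNat_right b 5).sub_right (Commute.refl b)
  rcases hcase with hx | hx
  · -- e = 2 - b, so 2 = b * (3 - b)
    have he' : (2 - b) * (2 - b) = 2 - b := by
      have hee : e = 2 - b := by
        rw [eq_sub_iff_add_eq, add_comm]
        exact hx.symm
      rw [← hee]; exact he
    have key : (2 : R) = b * (3 - b) := by
      have h0 : (2 - b) * (2 - b) - (2 - b) = 0 := by rw [he', sub_self]
      calc (2 : R) = b * (3 - b) + ((2 - b) * (2 - b) - (2 - b)) := by
            noncomm_ring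
        _ = b * (3 - b) := by rw [h0, add_zero]
    have h2 : (2 : R) ^ n = 0 := by
      rw [key, hb3.mul_pow, hn, zero_mul]
    refine ⟨n, ?_⟩
    have h6 : (6 : R) = 2 * 3 := by norm_num
    rw [h6, (Commute.ofNat_right (2 : R) 3).mul_pow, h2, zero_mul]
  · -- e = b - 2, so 6 = b * (5 - b)
    have he' : (b - 2) * (b - 2) = b - 2 := by
      have hee : e = b - 2 := by
        have h' := hx
        rw [eq_sub_iff_add_eq, add_comm, ← eq_sub_iff_add_eq] at h'
        exact h'
      rw [← hee]; exact he
    have key : (6 : R) = b * (5 - b) := by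
      have h0 : (b - 2) * (b - 2) - (b - 2) = 0 := by rw [he', sub_self]
      calc (6 : R) = b * (5 - b) + ((b - 2) * (b - 2) - (b - 2)) := by
            noncomm_ring
            norm_num
        _ = b * (5 - b) := by rw [h0, add_zero]
    refine ⟨n, ?_⟩
    rw [key, hb5.mul_pow, hn, zero_mul]

/-- A central nilpotent element lies in the Jacobson radical. -/
lemma central_nilpotent_mem_jacobson {x : R} (hx : IsNilpotent x)
    (hc : ∀ y : R, x * y = y * x) : x ∈ (⊥ : TwoSidedIdeal R).jacobson := by
  rw [TwoSidedIdeal.mem_jacobson_iff]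
  intro y
  have hnil : IsNilpotent (y * x) := by
    obtain ⟨n, hn⟩ := hx
    refine ⟨n, ?_⟩
    have hcom : Commute y x := (hc y).symm
    rw [hcom.mul_pow, hn, mul_zero]
  have hu : IsUnit (y * x + 1) := hnil.isUnit_add_one
  refine ⟨↑hu.unit⁻¹, ?_⟩
  rw [TwoSidedIdeal.mem_bot]
  have h1 : (↑hu.unit⁻¹ : R) * (y * x + 1) = 1 := hu.val_inv_mul
  calc (↑hu.unit⁻¹ : R) * y * x + ↑hu.unit⁻¹ - 1
      = ↑hu.unit⁻¹ * (y * x + 1) - 1 := by noncomm_ring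
    _ = 0 := by rw [h1, sub_self]

end Aux

theorem weaklyNilClean_decomposition {R : Type u} [Ring R] (h : IsWeaklyNilClean R) :
    ∃ (R₁ R₂ : Type u) (_ : Ring R₁) (_ : Ring R₂),
      Nonempty (R ≃+* R₁ × R₂) ∧ IsNilClean R₁ ∧ IsWeaklyNilClean R₂ ∧
        (3 : R₂) ∈ (⊥ : TwoSidedIdeal R₂).jacobson := by
  obtain ⟨n, h6⟩ := six_nilpotent h
  -- Bezout coefficients for 2^n, 3^n
  have hcop : IsCoprime ((2 : ℤ) ^ n) ((3 : ℤ) ^ n) := by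
    apply IsCoprime.pow
    rw [Int.isCoprime_iff_gcd_eq_one]
    decide
  obtain ⟨u, v, huv⟩ := hcop
  -- powers of 2 and 3 annihilate each other
  have h32 : (3 : R) ^ n * (2 : R) ^ n = 0 := by
    rw [← (Commute.ofNat_right (3 : R) 2).mul_pow]
    norm_num
    exact h6
  have h23 : (2 : R) ^ n * (3 : R) ^ n = 0 := by
    rw [← (Commute.ofNat_right (2 : R) 3).mul_pow]
    norm_num
    exact h6
  -- the central idempotent
  set ε : R := ((v * 3 ^ n : ℤ) : R) with hε
  have hcent : ∀ x : R, ε * x = x * ε := fun x => (Int.cast_commute _ x).eq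
  have hcent' : ∀ x : R, (1 - ε) * x = x * (1 - ε) := fun x => by
    rw [sub_mul, mul_sub, one_mul, mul_one, hcent]
  have hsumone : ((u * 2 ^ n : ℤ) : R) + ε = 1 := by
    rw [hε, ← Int.cast_add, huv, Int.cast_one]
  have hsub : (1 : R) - ε = ((u * 2 ^ n : ℤ) : R) :=
    sub_eq_iff_eq_add.mpr hsumone.symm
  have hε2 : ε * (2 : R) ^ n = 0 := by
    have h1 : ε * (2 : R) ^ n = (v : R) * ((3 : R) ^ n * (2 : R) ^ n) := by
      rw [hε]; push_cast; rw [mul_assoc]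
    rw [h1, h32, mul_zero]
  have h1ε3 : (1 - ε) * (3 : R) ^ n = 0 := by
    have h1 : ((u * 2 ^ n : ℤ) : R) * (3 : R) ^ n
        = (u : R) * ((2 : R) ^ n * (3 : R) ^ n) := by
      push_cast; rw [mul_assoc]
    rw [hsub, h1, h23, mul_zero]
  have hidem : ε * ε = ε := by
    have hz : (v * 3 ^ n) * (v * 3 ^ n) - v * 3 ^ n
        = (-(v * u)) * (2 ^ n * 3 ^ n) := by linear_combination (v * 3 ^ n) * huv
    have h1 : ε * ε - ε = ((-(v * u) : ℤ) : R) * ((2 : R) ^ n * (3 : R) ^ n) := by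
      rw [hε, ← Int.cast_mul, ← Int.cast_sub, hz]
      push_cast; ring_nf
    have h2 : ε * ε - ε = 0 := by rw [h1, h23, mul_zero]
    have := sub_eq_zero.mp h2
    exact this
  have hε0 : ε * (1 - ε) = 0 := by rw [mul_sub, mul_one, hidem, sub_self]
  have h1ε0 : (1 - ε) * ε = 0 := by rw [sub_mul, one_mul, hidem, sub_self]
  -- the two quotient rings
  set c₁ := idemCon ε hcent with hc₁
  set c₂ := idemCon (1 - ε) hcent' with hc₂
  refine ⟨c₁.Quotient, c₂.Quotient, inferInstance, inferInstance, ?_, ?_, ?_, ?_⟩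
  · -- the isomorphism
    refine ⟨RingEquiv.ofBijective ((c₁.mk').prod (c₂.mk')) ⟨?_, ?_⟩⟩
    · intro x y hxy
      rw [Prod.ext_iff] at hxy
      obtain ⟨hx1, hx2⟩ := hxy
      have e1 : ε * x = ε * y := (idemCon_eq ε hcent x y).mp hx1
      have e2 : (1 - ε) * x = (1 - ε) * y := (idemCon_eq (1 - ε) hcent' x y).mp hx2
      have : (ε + (1 - ε)) * x = (ε + (1 - ε)) * y := by
        rw [add_mul, add_mul, e1, e2]
      simpa using this
    · rintro ⟨q1, q2⟩
      obtain ⟨a, ha⟩ := Quotient.mk''_surjective q1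
      obtain ⟨b, hb⟩ := Quotient.mk''_surjective q2
      refine ⟨ε * a + (1 - ε) * b, ?_⟩
      have key1 : c₁.mk' (ε * a + (1 - ε) * b) = c₁.mk' a := by
        rw [idemCon_eq]
        rw [mul_add, ← mul_assoc, hidem, ← mul_assoc, hε0, zero_mul, add_zero]
      have key2 : c₂.mk' (ε * a + (1 - ε) * b) = c₂.mk' b := by
        rw [idemCon_eq]
        have h2idem : (1 - ε) * (1 - ε) = 1 - ε := by
          rw [mul_sub, mul_one, h1ε0, sub_zero]
        rw [mul_add, ← mul_assoc, h1ε0, zero_mul, ← mul_assoc, h2idem, zero_add]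
      ext
      · show c₁.mk' _ = q1
        rw [key1, ← ha]; rfl
      · show c₂.mk' _ = q2
        rw [key2, ← hb]; rfl
  · -- R₁ is nil-clean
    have hw : IsWeaklyNilClean c₁.Quotient :=
      isWeaklyNilClean_of_surjective c₁.mk' Quotient.mk''_surjective h
    apply isNilClean_of_two_nilpotent hw
    refine ⟨n, ?_⟩
    have hc2 : (2 : c₁.Quotient) = c₁.mk' 2 := (map_ofNat c₁.mk' 2).symm
    rw [hc2, ← map_pow]
    have : c₁.mk' ((2 : R) ^ n) = c₁.mk' 0 := by
      rw [idemCon_eq, hε2, mul_zero]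
    rw [this, map_zero]
  · -- R₂ is weakly nil-clean
    exact isWeaklyNilClean_of_surjective c₂.mk' Quotient.mk''_surjective h
  · -- 3 ∈ J(R₂)
    have h3nil : IsNilpotent (3 : c₂.Quotient) := by
      refine ⟨n, ?_⟩
      have hc3 : (3 : c₂.Quotient) = c₂.mk' 3 := (map_ofNat c₂.mk' 3).symm
      rw [hc3, ← map_pow]
      have : c₂.mk' ((3 : R) ^ n) = c₂.mk' 0 := by
        rw [idemCon_eq, h1ε3, mul_zero]
      rw [this, map_zero]
    exact central_nilpotent_mem_jacobson h3nil
      (fun y => (Commute.ofNat_right y 3).symm.eq)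
end

section
/- A ring R satisfies the nil-involution property if and only if R is weakly nil-clean and 2 is a unit in R. -/
private lemma two_commute_s8 {R : Type*} [Ring R] (x : R) : Commute (2 : R) x := by
  have h := (Commute.one_left x).add_left (Commute.one_left x)
  rwa [one_add_one_eq_two] at h

theorem nilInvolution_iff {R : Type*} [Ring R] :
    (∀ a : R, ∃ u v : R, a = u + v ∧ v ^ 2 = 1 ∧
        ∃ b : R, IsNilpotent b ∧ (u = b + 1 ∨ u = b - 1)) ↔
      IsWeaklyNilClean R ∧ IsUnit (2 : R) := by
  constructor
  · intro H
    have h2 : IsUnit (2 : R) := by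
      obtain ⟨u, v, h1, hv, b, hb, hu⟩ := H 1
      rcases hu with rfl | rfl
      · -- 1 = (b + 1) + v, so v = -b, hence 1 = v² = b·b is nilpotent: trivial ring
        have hbv : b + v = 0 := by
          rw [add_right_comm] at h1
          exact right_eq_add.mp h1
        have hveq : v = -b := eq_neg_of_add_eq_zero_right hbv
        have h1nil : IsNilpotent (1 : R) := by
          have : (1 : R) = b * b := by rw [← hv, pow_two, hveq, neg_mul_neg]
          rw [this]
          exact (Commute.refl b).isNilpotent_mul_right hb
        obtain ⟨n, hn⟩ := h1nil
        have h10 : (1 : R) = 0 := by simpa using hn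
        have : Subsingleton R := subsingleton_of_zero_eq_one h10.symm
        exact isUnit_of_subsingleton _
      · -- 1 = (b - 1) + v, so 2 = b + v, v a unit commuting with nilpotent b
        have hveq : (2 : R) = b + v := by
          have h2' : (1 : R) + 1 = (b - 1 + v) + 1 := by rw [← h1]
          rw [one_add_one_eq_two] at h2'
          rw [h2']; abel
        have hvv' : v * v = 1 := by rw [← pow_two]; exact hv
        have hvunit : IsUnit v := ⟨⟨v, v, hvv', hvv'⟩, rfl⟩
        have hcomm : Commute b v := by
          have hv2 : v = 2 - b := eq_sub_of_add_eq' hveq.symm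
          rw [hv2]
          exact (two_commute_s8 b).symm.sub_right (Commute.refl b)
        rw [hveq]
        exact hb.isUnit_add_right_of_commute hvunit hcomm
    refine ⟨?_, h2⟩
    intro a
    set h : R := ↑h2.unit⁻¹ with hh
    have h2h : (2 : R) * h = 1 := h2.mul_val_inv
    have hcentral : ∀ x : R, Commute h x := fun x => (two_commute_s8 x).units_inv_left
    obtain ⟨u, v, h1, hv, b, hb, hu⟩ := H (2 * a)
    have hvv : v * v = 1 := by rw [← pow_two]; exact hv
    have ha : a = h * (2 * a) := by rw [← mul_assoc, (hcentral 2).eq, h2h, one_mul]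
    have hbnil : IsNilpotent (h * b) := (hcentral b).isNilpotent_mul_left hb
    rcases hu with rfl | rfl
    · refine ⟨h * b, h * (1 + v), hbnil, ?_, Or.inl ?_⟩
      · show h * (1 + v) * (h * (1 + v)) = h * (1 + v)
        have hsq : (1 + v) * (1 + v) = 2 * (1 + v) := by
          have e1 : (1 + v) * (1 + v) = 1 + v + v + v * v := by noncomm_ring
          rw [e1, hvv]; noncomm_ring
        calc h * (1 + v) * (h * (1 + v)) = h * ((1 + v) * h) * (1 + v) := by noncomm_ring
          _ = h * (h * (1 + v)) * (1 + v) := by rw [(hcentral (1 + v)).eq]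
          _ = h * h * ((1 + v) * (1 + v)) := by noncomm_ring
          _ = h * (h * 2) * (1 + v) := by rw [hsq]; noncomm_ring
          _ = h * (1 + v) := by rw [(hcentral 2).eq, h2h, mul_one]
      · rw [ha, h1]; noncomm_ring
    · refine ⟨h * b, h * (1 - v), hbnil, ?_, Or.inr ?_⟩
      · show h * (1 - v) * (h * (1 - v)) = h * (1 - v)
        have hsq : (1 - v) * (1 - v) = 2 * (1 - v) := by
          have e1 : (1 - v) * (1 - v) = 1 - v - v + v * v := by noncomm_ring
          rw [e1, hvv]; noncomm_ring
        calc h * (1 - v) * (h * (1 - v)) = h * ((1 - v) * h) * (1 - v) := by noncomm_ring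
          _ = h * (h * (1 - v)) * (1 - v) := by rw [(hcentral (1 - v)).eq]
          _ = h * h * ((1 - v) * (1 - v)) := by noncomm_ring
          _ = h * (h * 2) * (1 - v) := by rw [hsq]; noncomm_ring
          _ = h * (1 - v) := by rw [(hcentral 2).eq, h2h, mul_one]
      · rw [ha, h1]; noncomm_ring
  · rintro ⟨W, h2⟩ a
    set h : R := ↑h2.unit⁻¹ with hh
    have h2h : (2 : R) * h = 1 := h2.mul_val_inv
    obtain ⟨b, e, hb, he, hcase⟩ := W (h * a)
    have ha : a = 2 * (h * a) := by rw [← mul_assoc, h2h, one_mul]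
    have hbnil : IsNilpotent (2 * b) := (two_commute_s8 b).isNilpotent_mul_left hb
    rcases hcase with hc | hc
    · refine ⟨2 * b + 1, 2 * e - 1, ?_, ?_, 2 * b, hbnil, Or.inl rfl⟩
      · rw [ha, hc]; noncomm_ring
      · have e1 : (2 * e - 1) ^ 2 = 4 * (e * e) - 4 * e + 1 := by noncomm_ring
        rw [e1, he.eq]; noncomm_ring
    · refine ⟨2 * b - 1, 1 - 2 * e, ?_, ?_, 2 * b, hbnil, Or.inr rfl⟩
      · rw [ha, hc]; noncomm_ring
      · have e1 : (1 - 2 * e) ^ 2 = 4 * (e * e) - 4 * e + 1 := by noncomm_ring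
        rw [e1, he.eq]; noncomm_ring
end

section
/- Every weakly nil-clean ring is clean, i.e., every element is a sum of a unit and an idempotent. -/
/-- If `A*B = 0` and `B*A = 0` and both are nilpotent, then `A + B` is nilpotent. -/
private lemma aux_nilp_add {R : Type*} [Ring R] {A B : R} (hAB : A * B = 0) (hBA : B * A = 0)
    (hA : IsNilpotent A) (hB : IsNilpotent B) : IsNilpotent (A + B) := by
  obtain ⟨i, hi⟩ := hA
  obtain ⟨j, hj⟩ := hB
  have key : ∀ n : ℕ, (A + B) ^ (n + 1) = A ^ (n + 1) + B ^ (n + 1) := by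
    intro n
    induction n with
    | zero => simp
    | succ n ih =>
      have h1 : A ^ (n + 1) * B = 0 := by
        rw [pow_succ, mul_assoc, hAB, mul_zero]
      have h2 : B ^ (n + 1) * A = 0 := by
        rw [pow_succ, mul_assoc, hBA, mul_zero]
      rw [pow_succ, ih, add_mul, mul_add, mul_add, h1, h2, ← pow_succ, ← pow_succ]
      abel
  refine ⟨i + j + 1, ?_⟩
  rw [key (i + j)]
  rw [pow_eq_zero_of_le (by omega) hi, pow_eq_zero_of_le (by omega) hj, add_zero]

/-- Key gluing lemma: given a central idempotent `c` killing `3^(K+1)` on its corner and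
`2^(K+1)` on the complementary corner, an element of the form `m - g - 1` with `m` nilpotent
and `g` idempotent is clean. -/
private lemma aux_key {R : Type*} [Ring R] (K : ℕ) (c g m a : R)
    (hc : ∀ r : R, c * r = r * c)
    (hcc : c * c = c)
    (hg : g * g = g)
    (hm : IsNilpotent m)
    (h3 : (3 : R) ^ (K + 1) * c = 0)
    (h2 : (2 : R) ^ (K + 1) * (1 - c) = 0)
    (ha : a = m - g - 1) :
    ∃ u e : R, IsUnit u ∧ IsIdempotentElem e ∧ a = u + e := by
  obtain ⟨d, hd_def⟩ : ∃ d' : R, d' = 1 - c := ⟨_, rfl⟩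
  rw [← hd_def] at h2
  have hd : ∀ r : R, d * r = r * d := by
    intro r
    simp only [hd_def, sub_mul, mul_sub, one_mul, mul_one, hc r]
  have hcd : c * d = 0 := by
    rw [hd_def, mul_sub, mul_one, hcc, sub_self]
  have hdc : d * c = 0 := by rw [← hc d]; exact hcd
  have hdd : d * d = d := by
    rw [hd_def, sub_mul, one_mul, mul_sub, mul_one, hcc]
    abel
  -- the idempotent
  obtain ⟨f, hf_def⟩ : ∃ f' : R, f' = c * (1 - g) + d * g := ⟨_, rfl⟩
  have hgg' : (1 - g) * (1 - g) = 1 - g := by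
    rw [sub_mul, one_mul, mul_sub, mul_one, hg]
    abel
  -- product rearrangement for central left factors
  have mul4 : ∀ (z : R), (∀ r : R, z * r = r * z) → ∀ (u x y : R),
      (u * x) * (z * y) = (u * z) * (x * y) := by
    intro z hz u x y
    calc (u * x) * (z * y) = u * ((x * z) * y) := by rw [mul_assoc, mul_assoc]
      _ = u * ((z * x) * y) := by rw [← hz x]
      _ = (u * z) * (x * y) := by rw [mul_assoc, mul_assoc]
  have hf : IsIdempotentElem f := by
    show f * f = f
    rw [hf_def, add_mul, mul_add, mul_add]
    rw [mul4 c hc c (1 - g) (1 - g), mul4 d hd c (1 - g) g,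
      mul4 c hc d g (1 - g), mul4 d hd d g g]
    rw [hcc, hcd, hdc, hdd, hgg', hg, zero_mul, zero_mul, add_zero, zero_add]
  refine ⟨a - f, f, ?_, hf, (sub_add_cancel a f).symm⟩
  -- now show `a - f` is a unit
  have h2comm : ∀ r : R, 2 * r = r * 2 := fun r => by rw [two_mul, mul_two]
  have h3comm : ∀ r : R, 3 * r = r * 3 := by
    intro r
    rw [show (3 : R) = 2 + 1 by norm_num, add_mul, mul_add, h2comm, mul_one, one_mul]
  obtain ⟨v, hv_def⟩ : ∃ v' : R, v' = c - d := ⟨_, rfl⟩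
  have hv : v * v = 1 := by
    rw [hv_def, sub_mul, mul_sub, mul_sub, hcc, hcd, hdc, hdd, hd_def]
    abel
  have hvm : Commute m v := by
    show m * v = v * m
    rw [hv_def, mul_sub, sub_mul, ← hc m, ← hd m]
  have hw : IsUnit (v + m) :=
    hm.isUnit_add_left_of_commute ⟨⟨v, v, hv, hv⟩, rfl⟩ hvm
  obtain ⟨t, ht_def⟩ : ∃ t' : R, t' = -(3 * c) + -(2 * (d * g)) := ⟨_, rfl⟩
  have hu_eq : a - f = (v + m) + t := by
    rw [ha, hf_def, ht_def, hv_def, hd_def]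
    simp only [mul_sub, sub_mul, mul_one, one_mul, show (3 : R) = 2 + 1 from by norm_num,
      add_mul, two_mul]
    abel
  -- central facts about 3*c and 2*d
  have h3c_comm : ∀ r : R, (3 * c) * r = r * (3 * c) := by
    intro r
    rw [mul_assoc, hc r, ← mul_assoc, h3comm r, mul_assoc]
  have h2d_comm : ∀ r : R, (2 * d) * r = r * (2 * d) := by
    intro r
    rw [mul_assoc, hd r, ← mul_assoc, h2comm r, mul_assoc]
  have hcpow : c ^ (K + 1) = c := IsIdempotentElem.pow_succ_eq K hcc
  have hdpow : d ^ (K + 1) = d := IsIdempotentElem.pow_succ_eq K hdd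
  have h3c_nil : IsNilpotent (3 * c) := by
    refine ⟨K + 1, ?_⟩
    rw [Commute.mul_pow (h3comm c), hcpow, h3]
  have h2d_nil : IsNilpotent (2 * d) := by
    refine ⟨K + 1, ?_⟩
    rw [Commute.mul_pow (h2comm d), hdpow]
    exact h2
  obtain ⟨W, hW⟩ := hw
  obtain ⟨A, hA_def⟩ : ∃ A' : R, A' = (↑W⁻¹ : R) * -(3 * c) := ⟨_, rfl⟩
  obtain ⟨B, hB_def⟩ : ∃ B' : R, B' = (↑W⁻¹ : R) * -(2 * (d * g)) := ⟨_, rfl⟩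
  have hWt : (↑W⁻¹ : R) * t = A + B := by rw [ht_def, mul_add, hA_def, hB_def]
  have hA_nil : IsNilpotent A := by
    have hcomm : Commute (↑W⁻¹ : R) (-(3 * c)) := by
      show (↑W⁻¹ : R) * -(3 * c) = -(3 * c) * (↑W⁻¹ : R)
      rw [mul_neg, neg_mul, h3c_comm]
    rw [hA_def]
    exact Commute.isNilpotent_mul_left hcomm h3c_nil.neg
  have hB_eq : B = (-(2 * d)) * ((↑W⁻¹ : R) * g) := by
    rw [hB_def, ← mul_assoc 2 d g, mul_neg, ← mul_assoc, ← h2d_comm (↑W⁻¹ : R), mul_assoc,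
      ← neg_mul]
  have hB_nil : IsNilpotent B := by
    rw [hB_eq]
    have hcomm : Commute (-(2 * d)) ((↑W⁻¹ : R) * g) := by
      show -(2 * d) * ((↑W⁻¹ : R) * g) = ((↑W⁻¹ : R) * g) * -(2 * d)
      rw [neg_mul, mul_neg, h2d_comm]
    exact Commute.isNilpotent_mul_right hcomm h2d_nil.neg
  have h32 : (3 * c) * (2 * d) = 0 := by
    rw [mul_assoc 3 c (2 * d), hc (2 * d), mul_assoc 2 d c, hdc]
    simp
  have h23 : (2 * d) * (3 * c) = 0 := by
    rw [mul_assoc 2 d (3 * c), hd (3 * c), mul_assoc 3 c d, hcd]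
    simp
  have hAB : A * B = 0 := by
    rw [hA_def, hB_eq, mul_assoc, ← mul_assoc (-(3 * c)) (-(2 * d)) _, neg_mul_neg, h32]
    simp
  have h3cneg_comm : ∀ r : R, -(3 * c) * r = r * -(3 * c) := by
    intro r
    rw [neg_mul, mul_neg, h3c_comm]
  have hBA : B * A = 0 := by
    have hsw : (↑W⁻¹ : R) * -(3 * c) = -(3 * c) * (↑W⁻¹ : R) := (h3cneg_comm (↑W⁻¹ : R)).symm
    rw [hB_eq, hA_def, hsw, mul4 (-(3 * c)) h3cneg_comm (-(2 * d)) ((↑W⁻¹ : R) * g) (↑W⁻¹ : R),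
      neg_mul_neg, h23, zero_mul]
  have hsum_nil : IsNilpotent ((↑W⁻¹ : R) * t) := by
    rw [hWt]; exact aux_nilp_add hAB hBA hA_nil hB_nil
  have hfinal : a - f = ↑W * (1 + (↑W⁻¹ : R) * t) := by
    rw [mul_add, mul_one, ← mul_assoc, W.mul_inv, one_mul, hu_eq, hW]
  rw [hfinal]
  exact W.isUnit.mul hsum_nil.isUnit_one_add

theorem weaklyNilClean_isClean {R : Type*} [Ring R] (h : IsWeaklyNilClean R) :
    ∀ a : R, ∃ u e : R, IsUnit u ∧ IsIdempotentElem e ∧ a = u + e := by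
  intro a
  -- Step 1: 6 is nilpotent
  obtain ⟨n, e, hn, he, hne⟩ := h 2
  have hn3 : Commute n (3 - n) := (Commute.ofNat_right n 3).sub_right (Commute.refl n)
  have hn5 : Commute n (5 - n) := (Commute.ofNat_right n 5).sub_right (Commute.refl n)
  have h6 : IsNilpotent (6 : R) := by
    rcases hne with h' | h'
    · have he2 : e = 2 - n := by rw [h']; abel
      have key : n * (3 - n) = (2 - n) - (2 - n) * (2 - n) + 2 := by noncomm_ring
      rw [← he2] at key
      rw [show e * e = e from he] at key
      simp only [sub_self, zero_add] at key
      have h2n : IsNilpotent (2 : R) := key ▸ hn3.isNilpotent_mul_right hn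
      have : (6 : R) = 2 * 3 := by norm_num
      rw [this]
      exact (Commute.ofNat_right (2 : R) 3).isNilpotent_mul_right h2n
    · have he2 : e = n - 2 := by rw [h']; abel
      have key : n * (5 - n) = (n - 2) - (n - 2) * (n - 2) + 6 := by
        noncomm_ring
        norm_num
      rw [← he2] at key
      rw [show e * e = e from he] at key
      simp only [sub_self, zero_add] at key
      exact key ▸ hn5.isNilpotent_mul_right hn
  obtain ⟨k, hk⟩ := h6
  have hk' : (6 : R) ^ (k + 1) = 0 := by rw [pow_succ, hk, zero_mul]
  -- Step 2: Bézout & central idempotent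
  have hcop : IsCoprime ((2 : ℤ) ^ (k + 1)) ((3 : ℤ) ^ (k + 1)) :=
    IsCoprime.pow (Int.isCoprime_iff_gcd_eq_one.mpr (by norm_num))
  obtain ⟨x, y, hxy⟩ := hcop
  set c : R := ((x * 2 ^ (k + 1) : ℤ) : R) with hc_def
  have hc : ∀ r : R, c * r = r * c := fun r => (Int.cast_commute _ r).eq
  have hcast6 : (((6 : ℤ) ^ (k + 1) : ℤ) : R) = 0 := by
    push_cast
    exact hk'
  have hd_eq : ((y * 3 ^ (k + 1) : ℤ) : R) = 1 - c := by
    have : ((x * 2 ^ (k + 1) + y * 3 ^ (k + 1) : ℤ) : R) = 1 := by rw [hxy]; norm_num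
    rw [Int.cast_add] at this
    rw [hc_def, ← this]
    abel
  have hzero : c * (1 - c) = 0 := by
    rw [← hd_eq, hc_def, ← Int.cast_mul,
      show (x * 2 ^ (k + 1)) * (y * 3 ^ (k + 1)) = (x * y) * 6 ^ (k + 1) by
        rw [show (6:ℤ) = 2 * 3 by norm_num, mul_pow]; ring,
      Int.cast_mul, hcast6, mul_zero]
  have hcc : c * c = c := by
    have := hzero
    rw [mul_sub, mul_one, sub_eq_zero] at this
    exact this.symm
  have h3c : (3 : R) ^ (k + 1) * c = 0 := by
    have : ((3 : ℤ) ^ (k + 1) : ℤ) * (x * 2 ^ (k + 1)) = x * 6 ^ (k + 1) := by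
      rw [show (6:ℤ) = 2 * 3 by norm_num, mul_pow]; ring
    have hcast : (((3 : ℤ) ^ (k + 1) : ℤ) : R) = (3 : R) ^ (k + 1) := by push_cast; ring
    rw [hc_def, ← hcast, ← Int.cast_mul, this, Int.cast_mul, hcast6, mul_zero]
  have h2d : (2 : R) ^ (k + 1) * (1 - c) = 0 := by
    have : ((2 : ℤ) ^ (k + 1) : ℤ) * (y * 3 ^ (k + 1)) = y * 6 ^ (k + 1) := by
      rw [show (6:ℤ) = 2 * 3 by norm_num, mul_pow]; ring
    have hcast : (((2 : ℤ) ^ (k + 1) : ℤ) : R) = (2 : R) ^ (k + 1) := by push_cast; ring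
    rw [← hd_eq, ← hcast, ← Int.cast_mul, this, Int.cast_mul, hcast6, mul_zero]
  -- Step 3: decompose a + 1
  obtain ⟨m, g, hm, hg, hmg⟩ := h (a + 1)
  rcases hmg with h' | h'
  · refine ⟨m - 1, g, hm.isUnit_sub_one, hg, ?_⟩
    have := eq_sub_of_add_eq h'
    rw [this]
    abel
  · have ha : a = m - g - 1 := by
      exact eq_sub_of_add_eq h'
    exact aux_key k c g m a hc hcc hg hm h3c h2d ha
end

section
/- The center of a weakly nil-clean ring is weakly nil-clean. More precisely, if R is weakly nil-clean and a ∈ Z(R), then there exist a central idempotent e and a central nilpotent b with a = b + e or a = b - e. -/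
private lemma aux_nil {R : Type*} [Ring R] {b y : R} (hb : IsNilpotent b)
    (hy : y = y * b - b * y) : y = 0 := by
  obtain ⟨n, hn⟩ := hb
  have hL : IsNilpotent (LinearMap.mulLeft ℤ b) :=
    ⟨n, by rw [LinearMap.pow_mulLeft, hn]; ext x; simp⟩
  have hR : IsNilpotent (LinearMap.mulRight ℤ b) :=
    ⟨n, by rw [LinearMap.pow_mulRight, hn]; ext x; simp⟩
  have hc : Commute (LinearMap.mulRight ℤ b) (LinearMap.mulLeft ℤ b) :=
    (LinearMap.commute_mulLeft_right (R := ℤ) b b).symm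
  obtain ⟨m, hm⟩ := hc.isNilpotent_sub hR hL
  have key : ∀ k : ℕ, y = ((LinearMap.mulRight ℤ b - LinearMap.mulLeft ℤ b) ^ k) y := by
    intro k
    induction k with
    | zero => simp
    | succ k ih =>
      rw [pow_succ, Module.End.mul_apply]
      have : (LinearMap.mulRight ℤ b - LinearMap.mulLeft ℤ b) y = y := by
        simp [LinearMap.sub_apply, LinearMap.mulRight_apply, LinearMap.mulLeft_apply, ← hy]
      rw [this]; exact ih
  have := key m
  rw [hm] at this
  simpa using this

private lemma aux_nil' {R : Type*} [Ring R] {b y : R} (hb : IsNilpotent b)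
    (hy : y = b * y - y * b) : y = 0 := by
  apply aux_nil hb.neg
  rw [mul_neg, neg_mul, sub_neg_eq_add, ← sub_eq_neg_add, ← hy]

theorem center_weaklyNilClean {R : Type*} [Ring R] (h : IsWeaklyNilClean R)
    (a : R) (ha : a ∈ Set.center R) :
    ∃ b e : R, b ∈ Set.center R ∧ e ∈ Set.center R ∧ IsNilpotent b ∧
      IsIdempotentElem e ∧ (a = b + e ∨ a = b - e) := by
  obtain ⟨b, e, hb, he, hcase⟩ := h a
  rw [Semigroup.mem_center_iff] at ha
  have hecen : ∀ x : R, x * e = e * x := by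
    intro x
    have h1 : e * x - e * x * e = 0 := by
      set y := e * x - e * x * e with hy
      have hya : y * a = a * y := ha y
      have hye : y * e = 0 := by simp [hy, mul_sub, sub_mul, mul_assoc, he.eq]
      have hey : e * y = y := by simp [hy, mul_sub, ← mul_assoc, he.eq]
      rcases hcase with hc | hc
      · apply aux_nil hb
        rw [hc, mul_add y b e, add_mul b e y, hye, add_zero, hey] at hya
        rw [eq_sub_iff_add_eq']
        exact hya.symm
      · apply aux_nil' hb
        rw [hc, mul_sub y b e, sub_mul b e y, hye, sub_zero, hey] at hya
        rw [eq_sub_iff_add_eq, add_comm]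
        exact (sub_eq_iff_eq_add.mp hya.symm).symm
    have h2 : x * e - e * x * e = 0 := by
      set z := x * e - e * x * e with hz
      have hza : z * a = a * z := ha z
      have hze : z * e = z := by simp [hz, sub_mul, mul_assoc, he.eq]
      have hez : e * z = 0 := by simp [hz, mul_sub, ← mul_assoc, he.eq]
      rcases hcase with hc | hc
      · apply aux_nil' hb
        rw [hc, mul_add z b e, add_mul b e z, hze, hez, add_zero] at hza
        rw [eq_sub_iff_add_eq, add_comm]
        exact hza
      · apply aux_nil hb
        rw [hc, mul_sub z b e, sub_mul b e z, hze, hez, sub_zero] at hza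
        rw [eq_sub_iff_add_eq']
        exact (sub_eq_iff_eq_add.mp hza).symm
    exact (sub_eq_zero.mp h2).trans (sub_eq_zero.mp h1).symm
  have heZ : e ∈ Set.center R := Semigroup.mem_center_iff.mpr fun g => hecen g
  have hbZ : b ∈ Set.center R := by
    rw [Semigroup.mem_center_iff]
    intro g
    rcases hcase with hc | hc
    · have hb' : b = a - e := by rw [hc]; abel
      rw [hb', mul_sub, sub_mul, ha g, hecen g]
    · have hb' : b = a + e := by rw [hc]; abel
      rw [hb', mul_add, add_mul, ha g, hecen g]
  exact ⟨b, e, hbZ, heZ, hb, he, hcase⟩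
end

section
/- Every reduced weakly nil-clean ring is commutative. -/
theorem reduced_weaklyNilClean_commutative {R : Type*} [Ring R] [IsReduced R]
    (h : IsWeaklyNilClean R) : ∀ x y : R, x * y = y * x := by
  have central : ∀ e : R, IsIdempotentElem e → ∀ x : R, e * x = x * e := by
    intro e he x
    have hee : e * e = e := he
    have hee2 : ∀ y : R, e * (e * y) = e * y := fun y => by rw [← mul_assoc, hee]
    have h1 : e * x = e * x * e := by
      have hsq : (e * x - e * x * e) * (e * x - e * x * e) = 0 := by
        simp only [mul_sub, sub_mul, mul_assoc, hee2]
        abel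
      have hnil : IsNilpotent (e * x - e * x * e) := ⟨2, by rw [pow_two, hsq]⟩
      exact sub_eq_zero.mp hnil.eq_zero
    have h2 : x * e = e * x * e := by
      have hsq : (x * e - e * x * e) * (x * e - e * x * e) = 0 := by
        simp only [mul_sub, sub_mul, mul_assoc, hee2]
        abel
      have hnil : IsNilpotent (x * e - e * x * e) := ⟨2, by rw [pow_two, hsq]⟩
      exact sub_eq_zero.mp hnil.eq_zero
    rw [h1, h2]
  intro x y
  obtain ⟨b, e, hb, he, hae⟩ := h x
  have hb0 : b = 0 := hb.eq_zero
  rcases hae with rfl | rfl <;> subst hb0 <;>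
    simp only [zero_add, zero_sub, neg_mul, mul_neg, central e he y]
end

section
/- Every weakly nil-clean element of an abelian ring is strongly π-regular: if r = b ± e with b nilpotent, e idempotent, and all idempotents of R central, then r^n ∈ r^(n+1)R ∩ R r^(n+1) for some n ≥ 1. -/
lemma nilClean_aux {R : Type*} [Ring R]
    (hab : ∀ e : R, IsIdempotentElem e → e ∈ Set.center R)
    (r b e : R) (hb : IsNilpotent b) (he : IsIdempotentElem e)
    (hr : r = b + e) :
    ∃ n : ℕ, 1 ≤ n ∧ (∃ s : R, r ^ n = r ^ (n + 1) * s) ∧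
      (∃ t : R, r ^ n = t * r ^ (n + 1)) := by
  obtain ⟨k, hk⟩ := hb
  obtain ⟨m, hm⟩ : ∃ m, m = k + 1 := ⟨k + 1, rfl⟩
  have hm1 : 1 ≤ m := by omega
  have hbm : b ^ m = 0 := by rw [hm, pow_succ, hk, zero_mul]
  have hec : ∀ y : R, e * y = y * e := fun y =>
    (Set.mem_center_iff.mp (hab e he)).comm y
  have hcbe : Commute b e := (hec b).symm
  have hx : IsNilpotent (b * e) := ⟨m, by rw [hcbe.mul_pow, hbm, zero_mul]⟩
  obtain ⟨u, hu⟩ := hx.isUnit_one_add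
  have hcu : Commute e (u : R) := by
    rw [Commute, SemiconjBy, hu, mul_add, add_mul, mul_one, one_mul, ← mul_assoc, ← hec b]
  have hcui : e * ((u⁻¹ : Rˣ) : R) = ((u⁻¹ : Rˣ) : R) * e := hcu.units_inv_right
  have hre : r * e = (u : R) * e := by
    rw [hr, hu, add_mul, add_mul, one_mul, mul_assoc, he.eq, add_comm]
  have hcre : Commute r (1 - e) := by
    rw [Commute, SemiconjBy, mul_sub, sub_mul, mul_one, one_mul, hec r]
  have h1 : r * (1 - e) = b * (1 - e) := by
    rw [hr, add_mul, mul_sub, mul_one, mul_sub, mul_one, he.eq, sub_self, add_zero]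
  have hcbe1 : Commute b (1 - e) := (Commute.one_right b).sub_right hcbe
  have h2 : r ^ m * (1 - e) = 0 := by
    have h2' : r ^ m * (1 - e) ^ m = (r * (1 - e)) ^ m := (hcre.mul_pow m).symm
    have h2'' : (1 - e) ^ m = 1 - e := by
      rw [hm]; exact he.one_sub.pow_succ_eq k
    rw [h2''] at h2'
    rw [h2', h1, hcbe1.mul_pow, hbm, zero_mul]
  have h3 : r ^ m * e = r ^ m := by
    have := h2
    rw [mul_sub, mul_one, sub_eq_zero] at this
    exact this.symm
  have key1 : r * (e * ((u⁻¹ : Rˣ) : R)) = e := by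
    rw [← mul_assoc, hre, mul_assoc, hcui, ← mul_assoc, u.mul_inv, one_mul]
  have key2 : (e * ((u⁻¹ : Rˣ) : R)) * r = e := by
    rw [hcui, mul_assoc, hec r, hre, ← mul_assoc, u.inv_mul, one_mul]
  refine ⟨m, hm1, ⟨e * ((u⁻¹ : Rˣ) : R), ?_⟩, ⟨e * ((u⁻¹ : Rˣ) : R), ?_⟩⟩
  · rw [pow_succ, mul_assoc, key1, h3]
  · rw [pow_succ', ← mul_assoc, key2, hec, h3]

theorem weaklyNilClean_element_strongly_pi_regular {R : Type*} [Ring R]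
    (hab : ∀ e : R, IsIdempotentElem e → e ∈ Set.center R)
    (r b e : R) (hb : IsNilpotent b) (he : IsIdempotentElem e)
    (hr : r = b + e ∨ r = b - e) :
    ∃ n : ℕ, 1 ≤ n ∧ (∃ s : R, r ^ n = r ^ (n + 1) * s) ∧
      (∃ t : R, r ^ n = t * r ^ (n + 1)) := by
  rcases hr with hr | hr
  · exact nilClean_aux hab r b e hb he hr
  · have hnr : -r = -b + e := by rw [hr, neg_sub, sub_eq_neg_add]
    obtain ⟨n, hn1, ⟨s, hs⟩, ⟨t, ht⟩⟩ := nilClean_aux hab (-r) (-b) e hb.neg he hnr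
    rcases Nat.even_or_odd n with hpar | hpar
    · have hodd : Odd (n + 1) := Even.add_one hpar
      rw [hpar.neg_pow, hodd.neg_pow] at hs ht
      refine ⟨n, hn1, ⟨-s, ?_⟩, ⟨-t, ?_⟩⟩
      · rw [mul_neg, ← neg_mul, ← hs]
      · rw [neg_mul, ← mul_neg, ← ht]
    · have heven : Even (n + 1) := Odd.add_one hpar
      rw [hpar.neg_pow, heven.neg_pow] at hs ht
      refine ⟨n, hn1, ⟨-s, ?_⟩, ⟨-t, ?_⟩⟩
      · rw [mul_neg, ← hs, neg_neg]
      · rw [neg_mul, ← ht, neg_neg]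
end

section
/- Let A be a square matrix over a commutative ring such that -A is similar to A (i.e., -A = PAP⁻¹ for some invertible P). Then A is nil-clean (a sum of a nilpotent and an idempotent matrix) if and only if A is weakly nil-clean (a sum or a difference of a nilpotent and an idempotent matrix). -/
lemma conj_pow_aux {M : Type*} [Monoid M] (u : Mˣ) (x : M) (k : ℕ) :
    ((u⁻¹ : Mˣ) * x * u) ^ k = (u⁻¹ : Mˣ) * x ^ k * u := by
  induction k with
  | zero => simp
  | succ k ih =>
    rw [pow_succ, ih, pow_succ]
    calc (u⁻¹ : Mˣ) * x ^ k * u * ((u⁻¹ : Mˣ) * x * u)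
        = (u⁻¹ : Mˣ) * x ^ k * ((u : M) * (u⁻¹ : Mˣ)) * x * u := by noncomm_ring
      _ = (u⁻¹ : Mˣ) * (x ^ k * x) * u := by
          rw [u.mul_inv]; noncomm_ring

theorem matrix_nilClean_iff_weaklyNilClean {n : Type*} [Fintype n] [DecidableEq n]
    {R : Type*} [CommRing R] (A : Matrix n n R)
    (hsim : ∃ P : (Matrix n n R)ˣ, -A = (P : Matrix n n R) * A * ((P⁻¹ : (Matrix n n R)ˣ) : Matrix n n R)) :
    (∃ N E : Matrix n n R, IsNilpotent N ∧ IsIdempotentElem E ∧ A = N + E) ↔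
      (∃ N E : Matrix n n R, IsNilpotent N ∧ IsIdempotentElem E ∧
        (A = N + E ∨ A = N - E)) := by
  constructor
  · rintro ⟨N, E, hN, hE, h⟩
    exact ⟨N, E, hN, hE, Or.inl h⟩
  · rintro ⟨N, E, hN, hE, h | h⟩
    · exact ⟨N, E, hN, hE, h⟩
    · obtain ⟨P, hP⟩ := hsim
      have hA : A = (P⁻¹ : (Matrix n n R)ˣ) * (-A) * P := by
        rw [hP]
        calc A = ((P⁻¹ : (Matrix n n R)ˣ) * P : Matrix n n R) * A * ((P⁻¹ : (Matrix n n R)ˣ) * P : Matrix n n R) := by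
              rw [P.inv_mul]; simp
          _ = ((P⁻¹ : (Matrix n n R)ˣ) : Matrix n n R) * ((P : Matrix n n R) * A * (P⁻¹ : (Matrix n n R)ˣ)) * P := by
              noncomm_ring
      refine ⟨(P⁻¹ : (Matrix n n R)ˣ) * (-N) * P, (P⁻¹ : (Matrix n n R)ˣ) * E * P, ?_, ?_, ?_⟩
      · obtain ⟨k, hk⟩ := hN
        exact ⟨k, by rw [conj_pow_aux, neg_pow, hk]; simp⟩
      · show _ * _ = _
        have := conj_pow_aux P E 2
        rw [pow_two, pow_two] at this
        rw [this, hE]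
      · rw [hA, h]
        noncomm_ring
end

section
/- Let D be a division ring and n ≥ 1. If the matrix ring Mₙ(D) is weakly nil-clean, then D has at most 3 elements. -/
open Matrix

/-- Key computational lemma: if the matrix with single entry `a` at `(i0,i0)` is
the sum of a nilpotent and an idempotent, then `a * a = a`. -/
theorem aux_nilclean {D : Type*} [DivisionRing D] {n : ℕ} (i0 : Fin n) (a : D)
    (B E : Matrix (Fin n) (Fin n) D) (hB : IsNilpotent B) (hE : E * E = E)
    (hBE : B + E = Matrix.diagonal (Pi.single i0 a)) :
    a * a = a := by
  classical
  obtain ⟨m, hm⟩ := hB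
  set A : Matrix (Fin n) (Fin n) D := Matrix.diagonal (Pi.single i0 a) with hAdef
  -- m ≠ 0
  rcases m with _ | m
  · exfalso
    rw [pow_zero] at hm
    have h1 := congrFun (congrFun hm i0) i0
    rw [Matrix.one_apply_eq, Matrix.zero_apply] at h1
    exact one_ne_zero h1
  have hEA : E = A - B := by rw [← hBE]; abel
  -- the key vectors
  set v : Fin n → D := Pi.single i0 1 with hvdef
  set w : Fin n → D := fun i => B i i0 with hwdef
  have hAx : ∀ x : Fin n → D, A *ᵥ x = Pi.single i0 (a * x i0) := by
    intro x
    funext i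
    rw [hAdef, Matrix.mulVec_diagonal]
    by_cases hi : i = i0
    · subst hi; simp
    · simp [Pi.single_eq_of_ne hi]
  have hBv : B *ᵥ v = w := by
    rw [hvdef, Matrix.mulVec_single]
    funext i
    simp [hwdef]
  -- general column computation
  have hcol : ∀ p q : D, B *ᵥ (fun i => (Pi.single i0 p : Fin n → D) i + w i * q)
      = fun i => w i * p + (B *ᵥ w) i * q := by
    intro p q
    have h1 : (fun i => (Pi.single i0 p : Fin n → D) i + w i * q)
        = Pi.single i0 p + fun i => w i * q := rfl
    rw [h1, Matrix.mulVec_add, Matrix.mulVec_single]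
    funext i
    have h2 : (B *ᵥ fun i => w i * q) i = (B *ᵥ w) i * q := by
      show (∑ j, B i j * (w j * q)) = (∑ j, B i j * w j) * q
      rw [Finset.sum_mul]
      exact Finset.sum_congr rfl fun j _ => (mul_assoc _ _ _).symm
    show B i i0 * p + (B *ᵥ fun i => w i * q) i = w i * p + (B *ᵥ w) i * q
    rw [h2]
  -- E *ᵥ computations
  have hEx : ∀ x : Fin n → D, E *ᵥ x = A *ᵥ x - B *ᵥ x := by
    intro x; rw [hEA, Matrix.sub_mulVec]
  -- u := E *ᵥ v
  have hu : E *ᵥ v = fun i => (Pi.single i0 a : Fin n → D) i + w i * (-1) := by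
    rw [hEx, hAx, hBv]
    funext i
    have : v i0 = 1 := Pi.single_eq_same i0 1
    rw [this, mul_one]
    simp [mul_neg_one, sub_eq_add_neg]
  -- idempotency applied to v
  have hidem : E *ᵥ (E *ᵥ v) = E *ᵥ v := by
    rw [Matrix.mulVec_mulVec, hE]
  set γ : D := a - a * a + a * w i0 with hγdef
  have hkey : B *ᵥ w = fun i => (Pi.single i0 γ : Fin n → D) i + w i * (a - 1) := by
    have h3 : E *ᵥ (E *ᵥ v) = fun i =>
        (Pi.single i0 (a * ((Pi.single i0 a : Fin n → D) i0 + w i0 * (-1))) : Fin n → D) i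
          - (w i * a + (B *ᵥ w) i * (-1)) := by
      rw [hu, hEx, hAx, hcol a (-1)]
      funext i
      simp
    rw [h3] at hidem
    rw [hu] at hidem
    funext i
    have h4 := congrFun hidem i
    rw [Pi.single_eq_same] at h4
    by_cases hi : i = i0
    · subst hi
      simp only [Pi.single_eq_same] at h4 ⊢
      -- h4 : a * (a + w i0 * -1) - (w i0 * a + (B *ᵥ w) i0 * -1) = a + w i0 * -1
      rw [hγdef]
      have h6 : a * (a + w i * -1) - (w i * a + (B *ᵥ w) i * -1) - (a + w i * -1) = 0 := by
        rw [h4]; abel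
      have h7 : (B *ᵥ w) i - (a - a * a + a * w i + w i * (a - 1))
          = a * (a + w i * -1) - (w i * a + (B *ᵥ w) i * -1) - (a + w i * -1) := by
        noncomm_ring
      rw [h6] at h7
      exact sub_eq_zero.mp h7
    · simp only [Pi.single_eq_of_ne hi] at h4 ⊢
      have h6 : 0 - (w i * a + (B *ᵥ w) i * -1) - (0 + w i * -1) = 0 := by
        rw [h4]; abel
      have h7 : (B *ᵥ w) i - (0 + w i * (a - 1))
          = 0 - (w i * a + (B *ᵥ w) i * -1) - (0 + w i * -1) := by
        noncomm_ring
      rw [h6] at h7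
      exact sub_eq_zero.mp h7
  -- iteration step
  have hstep : ∀ p q : D, B *ᵥ (fun i => (Pi.single i0 p : Fin n → D) i + w i * q)
      = fun i => (Pi.single i0 (γ * q) : Fin n → D) i + w i * (p + (a - 1) * q) := by
    intro p q
    rw [hcol p q]
    funext i
    rw [congrFun hkey i]
    by_cases hi : i = i0
    · subst hi; simp only [Pi.single_eq_same]; noncomm_ring
    · simp only [Pi.single_eq_of_ne hi]; noncomm_ring
  -- the coefficient sequence
  let Q : ℕ → D × D := fun j => Nat.rec ((0 : D), (1 : D))
      (fun _ pq => (γ * pq.2, pq.1 + (a - 1) * pq.2)) j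
  have hQsucc : ∀ k : ℕ, Q (k + 1) = (γ * (Q k).2, (Q k).1 + (a - 1) * (Q k).2) :=
    fun k => rfl
  have hQ : ∀ j : ℕ, (B ^ (j + 1)) *ᵥ v
      = fun i => (Pi.single i0 (Q j).1 : Fin n → D) i + w i * (Q j).2 := by
    intro j
    induction j with
    | zero =>
      rw [pow_one, hBv]
      funext i
      show w i = (Pi.single i0 ((0:D)) : Fin n → D) i + w i * 1
      rw [Pi.single_zero, mul_one]
      simp
    | succ k ih =>
      rw [pow_succ', ← Matrix.mulVec_mulVec, ih, hstep, hQsucc]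
  have h0 := hQ m
  rw [hm, Matrix.zero_mulVec] at h0
  by_cases hw : ∀ i, i ≠ i0 → w i = 0
  · -- Case 1 : the column of B is concentrated at i0
    have hwi : w = Pi.single i0 (w i0) := by
      funext i
      by_cases hi : i = i0
      · subst hi; rw [Pi.single_eq_same]
      · rw [Pi.single_eq_of_ne hi]; exact hw i hi
    have hpow : ∀ j : ℕ, B ^ (j + 1) *ᵥ v = Pi.single i0 ((w i0) ^ (j + 1)) := by
      intro j
      induction j with
      | zero => rw [pow_one, hBv]; simpa using hwi
      | succ k ih =>
        rw [pow_succ', ← Matrix.mulVec_mulVec, ih, Matrix.mulVec_single]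
        funext i
        by_cases hi : i = i0
        · subst hi
          rw [Pi.single_eq_same]
          exact (pow_succ' (w i) (k+1)).symm
        · rw [Pi.single_eq_of_ne hi]
          rw [show (MulOpposite.op (w i0 ^ (k + 1)) • B.col i0) i = w i * w i0 ^ (k + 1) from rfl, hw i hi, zero_mul]
    have h2 := hpow m
    rw [hm, Matrix.zero_mulVec] at h2
    have h3 : (w i0) ^ (m + 1) = 0 := by
      have h31 := congrFun h2 i0
      simp only [Pi.zero_apply, Pi.single_eq_same] at h31
      exact h31.symm
    have hbeta : w i0 = 0 := by
      by_contra hne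
      exact (pow_ne_zero _ hne) h3
    have hw0 : w = 0 := by rw [hwi, hbeta, Pi.single_zero]
    have h5 := hkey
    rw [hw0, Matrix.mulVec_zero] at h5
    have h6 := congrFun h5 i0
    simp only [Pi.zero_apply, Pi.single_eq_same, zero_mul, add_zero] at h6
    -- h6 : 0 = γ
    rw [hγdef, hbeta, mul_zero, add_zero] at h6
    exact (sub_eq_zero.mp h6.symm).symm
  · -- Case 2 : some other entry of the column is nonzero
    push_neg at hw
    obtain ⟨i1, hi1, hwi1⟩ := hw
    have hE2 : w i1 * (Q m).2 = 0 := by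
      have h8 := congrFun h0 i1
      simp only [Pi.zero_apply, Pi.single_eq_of_ne hi1, zero_add] at h8
      exact h8.symm
    have hq0 : (Q m).2 = 0 := by
      rcases mul_eq_zero.mp hE2 with h | h
      · exact absurd h hwi1
      · exact h
    have hp0 : (Q m).1 = 0 := by
      have h9 := congrFun h0 i0
      simp only [Pi.zero_apply, Pi.single_eq_same] at h9
      rw [hq0, mul_zero, add_zero] at h9
      exact h9.symm
    by_cases hg0 : γ = 0
    · have hQj : ∀ j : ℕ, Q j = (0, (a - 1) ^ j) := by
        intro j
        induction j with
        | zero => simp [Q]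
        | succ k ih =>
          rw [hQsucc, ih, hg0]
          simp [pow_succ']
      have h7 : (a - 1) ^ m = 0 := by rw [hQj m] at hq0; exact hq0
      have ha1 : a = 1 := by
        by_contra hne
        exact (pow_ne_zero m (sub_ne_zero.mpr hne)) h7
      rw [ha1, one_mul]
    · exfalso
      have hdesc : ∀ j : ℕ, Q j = (0, 0) → False := by
        intro j
        induction j with
        | zero =>
          intro hj
          exact one_ne_zero (congrArg Prod.snd hj)
        | succ k ih =>
          intro hj
          rw [hQsucc] at hj
          have h1 : γ * (Q k).2 = 0 := congrArg Prod.fst hj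
          have h2' : (Q k).2 = 0 := by
            rcases mul_eq_zero.mp h1 with h | h
            · exact absurd h hg0
            · exact h
          have h3' : (Q k).1 + (a - 1) * (Q k).2 = 0 := congrArg Prod.snd hj
          rw [h2', mul_zero, add_zero] at h3'
          exact ih (Prod.ext h3' h2')
      exact hdesc m (Prod.ext hp0 hq0)

theorem weaklyNilClean_matrix_card_le_three {D : Type*} [DivisionRing D] {n : ℕ}
    (hn : 1 ≤ n) (h : IsWeaklyNilClean (Matrix (Fin n) (Fin n) D)) :
    Cardinal.mk D ≤ 3 := by
  classical
  set i0 : Fin n := ⟨0, hn⟩ with hi0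
  have key : ∀ a : D, a = 0 ∨ a = 1 ∨ a = -1 := by
    intro a
    obtain ⟨B, E, hB, hEi, hcase⟩ := h (Matrix.diagonal (Pi.single i0 a))
    have hEE : E * E = E := hEi
    rcases hcase with hA | hA
    · have haa : a * a = a := aux_nilclean i0 a B E hB hEE hA.symm
      rcases mul_eq_zero.mp (show a * (a - 1) = 0 by
          rw [mul_sub, mul_one, haa, sub_self]) with h1 | h1
      · exact Or.inl h1
      · exact Or.inr (Or.inl (by rwa [sub_eq_zero] at h1))
    · have hdiagneg : Matrix.diagonal (Pi.single i0 (-a))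
          = -(Matrix.diagonal (Pi.single i0 a)) := by
        have hsneg : (Pi.single i0 (-a) : Fin n → D)
            = fun i => -(Pi.single i0 a : Fin n → D) i := by
          funext i
          by_cases hi : i = i0
          · subst hi; rw [Pi.single_eq_same, Pi.single_eq_same]
          · rw [Pi.single_eq_of_ne hi, Pi.single_eq_of_ne hi, neg_zero]
        rw [Matrix.diagonal_neg, hsneg]
      have hBE : (-B) + E = Matrix.diagonal (Pi.single i0 (-a)) := by
        rw [hdiagneg, hA]
        abel
      have haa : (-a) * (-a) = -a := aux_nilclean i0 (-a) (-B) E hB.neg hEE hBE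
      have haa2 : a * a = -a := by rwa [neg_mul_neg] at haa
      rcases mul_eq_zero.mp (show a * (a + 1) = 0 by
          rw [mul_add, mul_one, haa2, neg_add_cancel]) with h1 | h1
      · exact Or.inl h1
      · exact Or.inr (Or.inr (eq_neg_of_add_eq_zero_left h1))
  have hsub : (Set.univ : Set D) ⊆ ({0, 1, -1} : Set D) := by
    intro x _
    rcases key x with rfl | rfl | rfl <;> simp
  have hle3 : Cardinal.mk ({0, 1, -1} : Set D) ≤ 3 := by
    have t1 : Cardinal.mk ({0, 1, -1} : Set D)
        ≤ Cardinal.mk ({1, -1} : Set D) + 1 := Cardinal.mk_insert_le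
    have t2 : Cardinal.mk ({1, -1} : Set D)
        ≤ Cardinal.mk ({(-1 : D)} : Set D) + 1 := Cardinal.mk_insert_le
    have t3 : Cardinal.mk ({(-1 : D)} : Set D) = 1 := Cardinal.mk_singleton _
    calc Cardinal.mk ({0, 1, -1} : Set D)
        ≤ Cardinal.mk ({1, -1} : Set D) + 1 := t1
      _ ≤ (Cardinal.mk ({(-1 : D)} : Set D) + 1) + 1 := add_le_add_left t2 1
      _ = (1 + 1) + 1 := by rw [t3]
      _ = 3 := by norm_num
  calc Cardinal.mk D = Cardinal.mk (Set.univ : Set D) := Cardinal.mk_univ.symm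
    _ ≤ Cardinal.mk ({0, 1, -1} : Set D) := Cardinal.mk_le_mk_of_subset hsub
    _ ≤ 3 := hle3
end
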